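/- Let C be a small category and T₀, T₁ disjoint trees (subcategories whose localizations are indiscrete) in C, and let f : c₀ → c₁ be an arrow of C with c₀ an object of T₀ and c₁ an object of T₁. Define T to be the subcategory with objects Obj(T₀) ∪ Obj(T₁), morphisms those of T₀ and T₁, together with all composites β∘f∘α with α in T₀ and β in T₁, and no morphisms from objects of T₁ to objects of T₀. Then T is a tree, i.e., its localization is an indiscrete category. -/

import Mathlib

open CategoryTheory

universe v u

/-- A subcategory of a category `C`, given by a set of objects and sets of morphisms closed
under identities and composition. -/
structure Subcat (C : Type u) [Category.{v} C] : Type (max u v) where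
  objs : Set C
  homs : ∀ x y : C, Set (x ⟶ y)
  src_mem : ∀ {x y : C} {f : x ⟶ y}, f ∈ homs x y → x ∈ objs
  tgt_mem : ∀ {x y : C} {f : x ⟶ y}, f ∈ homs x y → y ∈ objs
  id_mem : ∀ x ∈ objs, 𝟙 x ∈ homs x x
  comp_mem : ∀ {x y z : C} {f : x ⟶ y} {g : y ⟶ z},
    f ∈ homs x y → g ∈ homs y z → f ≫ g ∈ homs x z

namespace Subcat
variable {C : Type u} [Category.{v} C] (S : Subcat C)

/-- The underlying category of a subcategory. -/
def carrier : Type u := {x : C // x ∈ S.objs}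

instance : Category.{v} S.carrier where
  Hom a b := {f : a.1 ⟶ b.1 // f ∈ S.homs a.1 b.1}
  id a := ⟨𝟙 a.1, S.id_mem a.1 a.2⟩
  comp f g := ⟨f.1 ≫ g.1, S.comp_mem f.2 g.2⟩
  id_comp f := Subtype.ext (Category.id_comp f.1)
  comp_id f := Subtype.ext (Category.comp_id f.1)
  assoc f g h := Subtype.ext (Category.assoc f.1 g.1 h.1)

/-- The inclusion functor of a subcategory. -/
def incl : S.carrier ⥤ C where
  obj x := x.1
  map f := f.1
  map_id _ := rfl
  map_comp _ _ := rfl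

end Subcat

/-- A category is indiscrete if there is exactly one morphism between any two objects. -/
def IsIndiscrete (D : Type*) [Category D] : Prop := ∀ x y : D, ∃! _f : x ⟶ y, True

/-- A small category is a tree if its localization (at all of its morphisms) is indiscrete. -/
def IsTree (T : Type*) [Category T] : Prop :=
  IsIndiscrete ((⊤ : MorphismProperty T).Localization)


namespace Stmt10Aux

universe w' v' u'

/-- The chaotic (indiscrete) category on a type. -/
def Chaos (X : Type u') : Type u' := X

instance chaosGroupoid (X : Type u') : Groupoid.{u'} (Chaos X) where
  Hom _ _ := PUnit
  id _ := PUnit.unit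
  comp _ _ := PUnit.unit
  inv _ := PUnit.unit

def chaosHom {X : Type u'} (x y : Chaos X) : x ⟶ y := PUnit.unit

lemma chaosHom_eq {X : Type u'} {x y : Chaos X} (u v : x ⟶ y) : u = v := rfl

def chaosPi (D : Type u') [Category.{v'} D] : D ⥤ Chaos D where
  obj x := x
  map _ := PUnit.unit

lemma chaosPi_inverts (D : Type u') [Category.{v'} D] :
    (⊤ : MorphismProperty D).IsInvertedBy (chaosPi D) := fun _ _ _ _ => inferInstance

noncomputable def idHom {D : Type*} [Category D] (h : IsIndiscrete D) (x y : D) : x ⟶ y :=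
  (h x y).exists.choose

lemma homEq {D : Type*} [Category D] (h : IsIndiscrete D) {x y : D} (u v : x ⟶ y) : u = v :=
  (h x y).unique trivial trivial

lemma isIso_idHom {D : Type*} [Category D] (h : IsIndiscrete D) (x y : D) :
    IsIso (idHom h x y) := ⟨idHom h y x, homEq h _ _, homEq h _ _⟩

def mkObj {C : Type u'} [Category.{v'} C] (S : Subcat C) (x : C) (hx : x ∈ S.objs) :
    S.carrier := ⟨x, hx⟩

def mkHom {C : Type u'} [Category.{v'} C] (S : Subcat C) {x y : C} (g : x ⟶ y)
    (hg : g ∈ S.homs x y) : mkObj S x (S.src_mem hg) ⟶ mkObj S y (S.tgt_mem hg) := ⟨g, hg⟩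

def subIncl {C : Type u'} [Category.{v'} C] (S S' : Subcat C) (ho : S.objs ⊆ S'.objs)
    (hh : ∀ {x y : C} (g : x ⟶ y), g ∈ S.homs x y → g ∈ S'.homs x y) :
    S.carrier ⥤ S'.carrier where
  obj x := ⟨x.1, ho x.2⟩
  map g := ⟨g.1, hh g.1 g.2⟩
  map_id _ := rfl
  map_comp _ _ := rfl

lemma eqToHom_comp_aux {D : Type*} {E : Type*} [Category D] [Category E] (G : D ⥤ E)
    {a b c : D} {a' b' c' : E} (ha : G.obj a = a') (hb : G.obj b = b') (hc : G.obj c = c')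
    (i1 : a ⟶ b) (i2 : b ⟶ c) (i3 : a ⟶ c) (h : i1 ≫ i2 = i3) :
    (eqToHom ha.symm ≫ G.map i1 ≫ eqToHom hb) ≫ eqToHom hb.symm ≫ G.map i2 ≫ eqToHom hc =
      eqToHom ha.symm ≫ G.map i3 ≫ eqToHom hc := by
  subst h ha hb hc; simp

lemma eqToHom_map_aux {D : Type*} {E : Type*} [Category D] [Category E] (G : D ⥤ E)
    {a b : D} {a' b' : E} (ha : G.obj a = a') (hb : G.obj b = b') (i j : a ⟶ b) (k : a' ⟶ b')
    (hij : i = j) (h1 : G.map i = eqToHom ha ≫ k ≫ eqToHom hb.symm) :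
    k = eqToHom ha.symm ≫ G.map j ≫ eqToHom hb := by
  subst hij ha hb; simp at h1 ⊢; exact h1.symm

end Stmt10Aux

open Stmt10Aux in
/-- Let `C` be a small category, `T₀, T₁` disjoint trees in `C` and
`f : c₀ ⟶ c₁` an arrow of `C` with `c₀` an object of `T₀` and `c₁` an object of `T₁`.
Then the subcategory `T` with objects `Obj(T₀) ∪ Obj(T₁)`, morphisms those of `T₀` and `T₁`
together with all composites `β ∘ f ∘ α` (`α` in `T₀`, `β` in `T₁`), and no morphisms from
objects of `T₁` to objects of `T₀`, is a tree. -/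
theorem stmt_10 {C : Type u} [Category.{v} C] (T₀ T₁ : Subcat C)
    (hdisj : Disjoint T₀.objs T₁.objs)
    (h₀ : IsTree T₀.carrier) (h₁ : IsTree T₁.carrier)
    {c₀ c₁ : C} (hc₀ : c₀ ∈ T₀.objs) (hc₁ : c₁ ∈ T₁.objs) (f : c₀ ⟶ c₁)
    (T : Subcat C)
    (hobjs : T.objs = T₀.objs ∪ T₁.objs)
    (hhoms : ∀ (x y : C) (g : x ⟶ y),
      g ∈ T.homs x y ↔ (g ∈ T₀.homs x y ∨ g ∈ T₁.homs x y ∨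
        ∃ (α : x ⟶ c₀) (β : c₁ ⟶ y), α ∈ T₀.homs x c₀ ∧ β ∈ T₁.homs c₁ y ∧
          g = α ≫ f ≫ β)) :
    IsTree T.carrier := by
  classical
  have hnot : ∀ x : C, x ∈ T₀.objs → x ∈ T₁.objs → False := fun x h0 h1 =>
    Set.disjoint_left.mp hdisj h0 h1
  have ho₀ : T₀.objs ⊆ T.objs := hobjs ▸ Set.subset_union_left
  have ho₁ : T₁.objs ⊆ T.objs := hobjs ▸ Set.subset_union_right
  let ι₀ : T₀.carrier ⥤ T.carrier :=
    subIncl T₀ T ho₀ (fun g hg => (hhoms _ _ g).2 (Or.inl hg))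
  let ι₁ : T₁.carrier ⥤ T.carrier :=
    subIncl T₁ T ho₁ (fun g hg => (hhoms _ _ g).2 (Or.inr (Or.inl hg)))
  let W : MorphismProperty T.carrier := ⊤
  let W₀ : MorphismProperty T₀.carrier := ⊤
  let W₁ : MorphismProperty T₁.carrier := ⊤
  have inv₀ : W₀.IsInvertedBy (ι₀ ⋙ W.Q) :=
    fun _ _ g _ => W.Q_inverts (ι₀.map g) (MorphismProperty.top_apply _)
  have inv₁ : W₁.IsInvertedBy (ι₁ ⋙ W.Q) :=
    fun _ _ g _ => W.Q_inverts (ι₁.map g) (MorphismProperty.top_apply _)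
  let G₀ : W₀.Localization ⥤ W.Localization := Localization.Construction.lift (ι₀ ⋙ W.Q) inv₀
  let G₁ : W₁.Localization ⥤ W.Localization := Localization.Construction.lift (ι₁ ⋙ W.Q) inv₁
  have fac₀ : W₀.Q ⋙ G₀ = ι₀ ⋙ W.Q := Localization.Construction.fac _ _
  have fac₁ : W₁.Q ⋙ G₁ = ι₁ ⋙ W.Q := Localization.Construction.fac _ _
  let e₀ : ∀ (x y : T.carrier), x.1 ∈ T₀.objs → y.1 ∈ T₀.objs → (W.Q.obj x ⟶ W.Q.obj y) :=
    fun x y hx hy =>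
      eqToHom (Functor.congr_obj fac₀ ⟨x.1, hx⟩).symm ≫
        G₀.map (idHom h₀ (W₀.Q.obj ⟨x.1, hx⟩) (W₀.Q.obj ⟨y.1, hy⟩)) ≫
        eqToHom (Functor.congr_obj fac₀ ⟨y.1, hy⟩)
  let e₁ : ∀ (x y : T.carrier), x.1 ∈ T₁.objs → y.1 ∈ T₁.objs → (W.Q.obj x ⟶ W.Q.obj y) :=
    fun x y hx hy =>
      eqToHom (Functor.congr_obj fac₁ ⟨x.1, hx⟩).symm ≫
        G₁.map (idHom h₁ (W₁.Q.obj ⟨x.1, hx⟩) (W₁.Q.obj ⟨y.1, hy⟩)) ≫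
        eqToHom (Functor.congr_obj fac₁ ⟨y.1, hy⟩)
  have e₀_def : ∀ x y hx hy, e₀ x y hx hy =
      eqToHom (Functor.congr_obj fac₀ ⟨x.1, hx⟩).symm ≫
        G₀.map (idHom h₀ (W₀.Q.obj ⟨x.1, hx⟩) (W₀.Q.obj ⟨y.1, hy⟩)) ≫
        eqToHom (Functor.congr_obj fac₀ ⟨y.1, hy⟩) := fun _ _ _ _ => rfl
  have e₁_def : ∀ x y hx hy, e₁ x y hx hy =
      eqToHom (Functor.congr_obj fac₁ ⟨x.1, hx⟩).symm ≫
        G₁.map (idHom h₁ (W₁.Q.obj ⟨x.1, hx⟩) (W₁.Q.obj ⟨y.1, hy⟩)) ≫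
        eqToHom (Functor.congr_obj fac₁ ⟨y.1, hy⟩) := fun _ _ _ _ => rfl
  have e₀_map : ∀ (x y : T.carrier) (hx : x.1 ∈ T₀.objs) (hy : y.1 ∈ T₀.objs)
      (g : x ⟶ y), g.1 ∈ T₀.homs x.1 y.1 → W.Q.map g = e₀ x y hx hy := by
    intro x y hx hy g hg
    have h1 := Functor.congr_hom fac₀ (mkHom T₀ g.1 hg)
    simp only [mkHom, mkObj, Functor.comp_map] at h1
    rw [e₀_def]
    exact eqToHom_map_aux G₀ _ _ (W₀.Q.map (mkHom T₀ g.1 hg)) _ _ (homEq h₀ _ _) h1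
  have e₁_map : ∀ (x y : T.carrier) (hx : x.1 ∈ T₁.objs) (hy : y.1 ∈ T₁.objs)
      (g : x ⟶ y), g.1 ∈ T₁.homs x.1 y.1 → W.Q.map g = e₁ x y hx hy := by
    intro x y hx hy g hg
    have h1 := Functor.congr_hom fac₁ (mkHom T₁ g.1 hg)
    simp only [mkHom, mkObj, Functor.comp_map] at h1
    rw [e₁_def]
    exact eqToHom_map_aux G₁ _ _ (W₁.Q.map (mkHom T₁ g.1 hg)) _ _ (homEq h₁ _ _) h1
  have e₀_comp : ∀ x y z hx hy hz, e₀ x y hx hy ≫ e₀ y z hy hz = e₀ x z hx hz := by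
    intro x y z hx hy hz
    rw [e₀_def, e₀_def, e₀_def]
    exact eqToHom_comp_aux G₀ (Functor.congr_obj fac₀ ⟨x.1, hx⟩) (Functor.congr_obj fac₀ ⟨y.1, hy⟩)
      (Functor.congr_obj fac₀ ⟨z.1, hz⟩) _ _ _ (homEq h₀ _ _)
  have e₁_comp : ∀ x y z hx hy hz, e₁ x y hx hy ≫ e₁ y z hy hz = e₁ x z hx hz := by
    intro x y z hx hy hz
    rw [e₁_def, e₁_def, e₁_def]
    exact eqToHom_comp_aux G₁ (Functor.congr_obj fac₁ ⟨x.1, hx⟩) (Functor.congr_obj fac₁ ⟨y.1, hy⟩)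
      (Functor.congr_obj fac₁ ⟨z.1, hz⟩) _ _ _ (homEq h₁ _ _)
  have e₀_id : ∀ x hx, e₀ x x hx hx = 𝟙 _ := by
    intro x hx
    rw [← e₀_map x x hx hx (𝟙 x) (T₀.id_mem x.1 hx), W.Q.map_id]
  have e₁_id : ∀ x hx, e₁ x x hx hx = 𝟙 _ := by
    intro x hx
    rw [← e₁_map x x hx hx (𝟙 x) (T₁.id_mem x.1 hx), W.Q.map_id]
  have isoe₀ : ∀ x y hx hy, IsIso (e₀ x y hx hy) := by
    intro x y hx hy
    rw [e₀_def]
    haveI := isIso_idHom h₀ (W₀.Q.obj ⟨x.1, hx⟩) (W₀.Q.obj ⟨y.1, hy⟩)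
    exact IsIso.comp_isIso' (eqToIso (Functor.congr_obj fac₀ ⟨x.1, hx⟩).symm).isIso_hom
      (IsIso.comp_isIso' (Functor.map_isIso G₀ _) (eqToIso (Functor.congr_obj fac₀ ⟨y.1, hy⟩)).isIso_hom)
  have isoe₁ : ∀ x y hx hy, IsIso (e₁ x y hx hy) := by
    intro x y hx hy
    rw [e₁_def]
    haveI := isIso_idHom h₁ (W₁.Q.obj ⟨x.1, hx⟩) (W₁.Q.obj ⟨y.1, hy⟩)
    exact IsIso.comp_isIso' (eqToIso (Functor.congr_obj fac₁ ⟨x.1, hx⟩).symm).isIso_hom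
      (IsIso.comp_isIso' (Functor.map_isIso G₁ _) (eqToIso (Functor.congr_obj fac₁ ⟨y.1, hy⟩)).isIso_hom)
  let cT₀ : T.carrier := ⟨c₀, ho₀ hc₀⟩
  let cT₁ : T.carrier := ⟨c₁, ho₁ hc₁⟩
  have hfT : f ∈ T.homs c₀ c₁ := (hhoms _ _ f).2 (Or.inr (Or.inr
    ⟨𝟙 c₀, 𝟙 c₁, T₀.id_mem _ hc₀, T₁.id_mem _ hc₁, by simp⟩))
  let fT : cT₀ ⟶ cT₁ := ⟨f, hfT⟩
  have hQf : IsIso (W.Q.map fT) := W.Q_inverts fT (MorphismProperty.top_apply _)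
  have memU : ∀ x : T.carrier, x.1 ∈ T₀.objs ∪ T₁.objs := fun x => by
    rw [← hobjs]; exact x.2
  let a : ∀ x : T.carrier, W.Q.obj x ⟶ W.Q.obj cT₁ := fun x =>
    if hx : x.1 ∈ T₀.objs then e₀ x cT₀ hx hc₀ ≫ W.Q.map fT
    else e₁ x cT₁ ((memU x).resolve_left hx) hc₁
  have a_def : ∀ x, a x = if hx : x.1 ∈ T₀.objs then e₀ x cT₀ hx hc₀ ≫ W.Q.map fT
      else e₁ x cT₁ ((memU x).resolve_left hx) hc₁ := fun _ => rfl
  have a0 : ∀ x (hx : x.1 ∈ T₀.objs), a x = e₀ x cT₀ hx hc₀ ≫ W.Q.map fT := by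
    intro x hx; rw [a_def, dif_pos hx]
  have a1 : ∀ x (hx : x.1 ∈ T₁.objs), a x = e₁ x cT₁ hx hc₁ := by
    intro x hx
    have hx0 : ¬ x.1 ∈ T₀.objs := fun h => hnot _ h hx
    rw [a_def, dif_neg hx0]
  have isoa : ∀ x, IsIso (a x) := by
    intro x
    by_cases hx : x.1 ∈ T₀.objs
    · rw [a0 x hx]
      haveI := isoe₀ x cT₀ hx hc₀
      haveI := hQf
      infer_instance
    · rw [a1 x ((memU x).resolve_left hx)]
      exact isoe₁ _ _ _ _
  let e : ∀ x y : T.carrier, W.Q.obj x ⟶ W.Q.obj y := fun x y =>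
    a x ≫ @inv _ _ _ _ (a y) (isoa y)
  have e_def : ∀ x y, e x y = a x ≫ @inv _ _ _ _ (a y) (isoa y) := fun _ _ => rfl
  have Qcomp_a : ∀ (x y : T.carrier) (g : x ⟶ y), W.Q.map g ≫ a y = a x := by
    intro x y g
    rcases (hhoms _ _ g.1).1 g.2 with hg | hg | ⟨α, β, hα, hβ, heq⟩
    · have hx := T₀.src_mem hg; have hy := T₀.tgt_mem hg
      rw [a0 x hx, a0 y hy, e₀_map x y hx hy g hg, ← Category.assoc, e₀_comp]
    · have hx := T₁.src_mem hg; have hy := T₁.tgt_mem hg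
      rw [a1 x hx, a1 y hy, e₁_map x y hx hy g hg, e₁_comp]
    · have hx := T₀.src_mem hα; have hy := T₁.tgt_mem hβ
      have hαT : α ∈ T.homs x.1 c₀ := (hhoms _ _ α).2 (Or.inl hα)
      have hβT : β ∈ T.homs c₁ y.1 := (hhoms _ _ β).2 (Or.inr (Or.inl hβ))
      have hgfact : g = (⟨α, hαT⟩ : x ⟶ cT₀) ≫ fT ≫ (⟨β, hβT⟩ : cT₁ ⟶ y) := Subtype.ext heq
      rw [a1 y hy, a0 x hx, hgfact, W.Q.map_comp, W.Q.map_comp, Category.assoc, Category.assoc,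
        e₁_map cT₁ y hc₁ hy ⟨β, hβT⟩ hβ, e₁_comp, e₁_id, Category.comp_id,
        e₀_map x cT₀ hx hc₀ ⟨α, hαT⟩ hα]
  have e_map : ∀ (x y : T.carrier) (g : x ⟶ y), W.Q.map g = e x y := by
    intro x y g
    rw [e_def]
    haveI := isoa y
    rw [IsIso.eq_comp_inv]
    exact Qcomp_a x y g
  have e_id : ∀ x, e x x = 𝟙 _ := by
    intro x
    rw [e_def]
    haveI := isoa x
    simp
  have e_comp : ∀ x y z, e x y ≫ e y z = e x z := by
    intro x y z
    rw [e_def, e_def, e_def]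
    haveI := isoa x; haveI := isoa y; haveI := isoa z
    simp
  let Ψ : Chaos T.carrier ⥤ W.Localization :=
    { obj := fun x => W.Q.obj x
      map := fun {x y} _ => e x y
      map_id := fun x => e_id x
      map_comp := fun {x y z} _ _ => (e_comp x y z).symm }
  have invπ : W.IsInvertedBy (chaosPi T.carrier) := chaosPi_inverts T.carrier
  let Φ : W.Localization ⥤ Chaos T.carrier := Localization.Construction.lift (chaosPi T.carrier) invπ
  have hfacΦ : W.Q ⋙ Φ = chaosPi T.carrier := Localization.Construction.fac _ _
  have key : W.Q ⋙ (Φ ⋙ Ψ) = W.Q ⋙ 𝟭 _ := by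
    rw [← Functor.assoc, hfacΦ]
    refine CategoryTheory.Functor.ext (fun x => rfl) ?_
    intro x y g
    simp only [Functor.comp_map, Functor.id_map, eqToHom_refl, Category.comp_id, Category.id_comp]
    exact (e_map x y g).symm
  have main : Φ ⋙ Ψ = 𝟭 _ := Localization.Construction.uniq _ _ key
  intro X Y
  refine ⟨eqToHom (Functor.congr_obj main X).symm ≫
      Ψ.map (chaosHom (Φ.obj X) (Φ.obj Y)) ≫ eqToHom (Functor.congr_obj main Y), trivial, ?_⟩
  intro v _
  have hv := Functor.congr_hom main v
  rw [Functor.comp_map, Functor.id_map] at hv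
  rw [chaosHom_eq (chaosHom (Φ.obj X) (Φ.obj Y)) (Φ.map v), hv]
  simp
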